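/- For every CAT(0) space X there exists a unique topology T_Δ on X with the following two properties: (i) a sequence (x_n) in X converges to a point x with respect to T_Δ if and only if (x_n) is bounded and converges weakly to x; (ii) T_Δ is sequential. -/

import Mathlib

open Filter Topology Metric Set

/-- `m` is a midpoint of `x` and `y`. -/
def IsMidpoint {X : Type*} [MetricSpace X] (x y m : X) : Prop :=
  dist x m = dist x y / 2 ∧ dist y m = dist x y / 2

/-- A CAT(0) space: a complete metric space with midpoints satisfying the
CN-inequality of Bruhat–Tits. -/
def IsCAT0 (X : Type*) [MetricSpace X] : Prop :=
  CompleteSpace X ∧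
    (∀ x y : X, ∃ m : X, IsMidpoint x y m) ∧
    (∀ x y z m : X, IsMidpoint x y m →
      dist z m ^ 2 ≤ dist z x ^ 2 / 2 + dist z y ^ 2 / 2 - dist x y ^ 2 / 4)

/-- `G` is a (compact) geodesic segment starting at `x`: the image of an
isometric embedding of a compact interval `[0, L]` whose left endpoint is
mapped to `x`. -/
def IsGeodesicSegmentFrom {X : Type*} [MetricSpace X] (x : X) (G : Set X) : Prop :=
  ∃ (L : ℝ) (γ : ℝ → X), 0 ≤ L ∧ γ 0 = x ∧
    (∀ s ∈ Icc (0:ℝ) L, ∀ t ∈ Icc (0:ℝ) L, dist (γ s) (γ t) = |s - t|) ∧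
    G = γ '' Icc (0:ℝ) L

/-- `G` is a geodesic segment from `x` to `y`. -/
def IsGeodesicSegmentBetween {X : Type*} [MetricSpace X] (x y : X) (G : Set X) : Prop :=
  ∃ γ : ℝ → X, γ 0 = x ∧ γ (dist x y) = y ∧
    (∀ s ∈ Icc (0:ℝ) (dist x y), ∀ t ∈ Icc (0:ℝ) (dist x y),
      dist (γ s) (γ t) = |s - t|) ∧
    G = γ '' Icc (0:ℝ) (dist x y)

/-- `p` is a nearest point of `C` to `z` (a closest-point projection of `z`
onto `C`). -/
def IsNearestPoint {X : Type*} [MetricSpace X] (z : X) (C : Set X) (p : X) : Prop :=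
  p ∈ C ∧ ∀ q ∈ C, dist z p ≤ dist z q

/-- Weak (Δ-)convergence of a net `u` (indexed by a preordered set) to `x`:
for every geodesic segment `G` starting at `x`, the closest-point projections
of the `u i` onto `G` converge to `x` in the metric. -/
def WeakConv {X : Type*} [MetricSpace X] {I : Type*} [Preorder I]
    (u : I → X) (x : X) : Prop :=
  ∀ G : Set X, IsGeodesicSegmentFrom x G →
    ∀ p : I → X, (∀ i, IsNearestPoint (u i) G (p i)) → Tendsto p atTop (𝓝 x)

/-- The sets that are closed in the weak topology `T_Δ`: sets containing all
weak limits of bounded sequences of their elements. -/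
def TdeltaClosed {X : Type*} [MetricSpace X] (A : Set X) : Prop :=
  ∀ u : ℕ → X, (∀ n, u n ∈ A) → Bornology.IsBounded (Set.range u) →
    ∀ x : X, WeakConv u x → x ∈ A

/-- `T` is the weak topology `T_Δ`: its closed sets are exactly the weakly
sequentially closed sets. -/
def IsWeakTopology {X : Type*} [MetricSpace X] (T : TopologicalSpace X) : Prop :=
  ∀ A : Set X, @IsClosed X T A ↔ TdeltaClosed A

/-- Geodesic convexity of a subset of a metric space. -/
def GeodesicallyConvex {X : Type*} [MetricSpace X] (C : Set X) : Prop :=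
  ∀ x ∈ C, ∀ y ∈ C, ∀ G : Set X, IsGeodesicSegmentBetween x y G → G ⊆ C

/-- The coconvex topology `T_co`: the coarsest topology on `X` in which every
metrically closed, (geodesically) convex set is closed. -/
def coconvexTopology (X : Type*) [MetricSpace X] : TopologicalSpace X :=
  TopologicalSpace.generateFrom
    {U : Set X | ∃ C : Set X, IsClosed C ∧ GeodesicallyConvex C ∧ U = Cᶜ}

section part1
variable {X : Type*} [MetricSpace X]

lemma seg_compact {x : X} {G : Set X} (hG : IsGeodesicSegmentFrom x G) :
    IsCompact G ∧ x ∈ G := by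
  obtain ⟨L, γ, hL, hγ0, hiso, rfl⟩ := hG
  refine ⟨isCompact_Icc.image_of_continuousOn ?_, ⟨0, ⟨le_refl _, hL⟩, hγ0⟩⟩
  rw [Metric.continuousOn_iff]
  intro b hb ε hε
  exact ⟨ε, hε, fun a ha hab => by
    rw [hiso a ha b hb, ← Real.dist_eq]; exact hab⟩

lemma exists_nearest {x : X} {G : Set X} (hG : IsGeodesicSegmentFrom x G) (z : X) :
    ∃ p, IsNearestPoint z G p := by
  obtain ⟨hc, hx⟩ := seg_compact hG
  obtain ⟨p, hp, hmin⟩ := hc.exists_isMinOn ⟨x, hx⟩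
    (Continuous.continuousOn (continuous_const.dist continuous_id))
  exact ⟨p, hp, fun q hq => hmin hq⟩

/-- the midpoint of two points on a geodesic segment, within the segment -/
lemma seg_midpoint {x : X} {G : Set X} (hG : IsGeodesicSegmentFrom x G)
    {p q : X} (hp : p ∈ G) (hq : q ∈ G) :
    ∃ m ∈ G, IsMidpoint p q m := by
  obtain ⟨L, γ, hL, hγ0, hiso, rfl⟩ := hG
  obtain ⟨s, hs, rfl⟩ := hp
  obtain ⟨t, ht, rfl⟩ := hq
  have hm : (s + t) / 2 ∈ Icc (0:ℝ) L := by
    constructor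
    · linarith [hs.1, ht.1]
    · linarith [hs.2, ht.2]
  refine ⟨γ ((s + t) / 2), mem_image_of_mem _ hm, ?_, ?_⟩
  · rw [hiso s hs _ hm, hiso s hs t ht]
    have h1 : s - (s + t) / 2 = (s - t) / 2 := by ring
    rw [h1, abs_div]; norm_num
  · rw [hiso t ht _ hm, hiso s hs t ht]
    have h1 : t - (s + t) / 2 = -((s - t) / 2) := by ring
    rw [h1, abs_neg, abs_div]; norm_num

end part1

section part2
variable {X : Type*} [MetricSpace X]

lemma nearest_unique
    (hcn : ∀ x y z m : X, IsMidpoint x y m →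
      dist z m ^ 2 ≤ dist z x ^ 2 / 2 + dist z y ^ 2 / 2 - dist x y ^ 2 / 4)
    {x : X} {G : Set X} (hG : IsGeodesicSegmentFrom x G) {z p p' : X}
    (hp : IsNearestPoint z G p) (hp' : IsNearestPoint z G p') : p = p' := by
  obtain ⟨m, hmG, hmid⟩ := seg_midpoint hG hp.1 hp'.1
  have hD : dist z p = dist z p' := le_antisymm (hp.2 _ hp'.1) (hp'.2 _ hp.1)
  have h1 := hcn p p' z m hmid
  have h2 := hp.2 m hmG
  have h3 : dist z p ≥ 0 := dist_nonneg
  have h4 : dist p p' = 0 := by nlinarith [dist_nonneg (x := p) (y := p'), dist_nonneg (x := z) (y := m)]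
  exact dist_eq_zero.mp h4

lemma nearest_pythagoras
    (hcn : ∀ x y z m : X, IsMidpoint x y m →
      dist z m ^ 2 ≤ dist z x ^ 2 / 2 + dist z y ^ 2 / 2 - dist x y ^ 2 / 4)
    {x : X} {G : Set X} (hG : IsGeodesicSegmentFrom x G) {z p q : X}
    (hp : IsNearestPoint z G p) (hq : q ∈ G) :
    dist z p ^ 2 + dist p q ^ 2 / 2 ≤ dist z q ^ 2 := by
  obtain ⟨m, hmG, hmid⟩ := seg_midpoint hG hp.1 hq
  have h1 := hcn p q z m hmid
  have h2 := hp.2 m hmG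
  nlinarith [dist_nonneg (x := z) (y := p), dist_nonneg (x := z) (y := m)]

lemma nearest_self {z : X} {G : Set X} {p : X} (hp : IsNearestPoint z G p)
    (hz : z ∈ G) : p = z := by
  have := hp.2 z hz
  simp only [dist_self] at this
  exact (dist_eq_zero.mp (le_antisymm this dist_nonneg)).symm

lemma weakConv_subseq
    (hcn : ∀ x y z m : X, IsMidpoint x y m →
      dist z m ^ 2 ≤ dist z x ^ 2 / 2 + dist z y ^ 2 / 2 - dist x y ^ 2 / 4)
    {u : ℕ → X} {x : X} (h : WeakConv u x) {φ : ℕ → ℕ} (hφ : StrictMono φ) :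
    WeakConv (u ∘ φ) x := by
  intro G hG q hq
  choose p hp using fun n => exists_nearest hG (u n)
  have ht := (h G hG p hp).comp hφ.tendsto_atTop
  exact ht.congr fun n => (nearest_unique hcn hG (hp (φ n)) (hq n))

end part2

section part3
variable {X : Type*} [MetricSpace X]

set_option maxHeartbeats 1000000 in
lemma exists_geodesic_fun (hX : IsCAT0 X) (x y : X) :
    ∃ γ : ℝ → X, γ 0 = x ∧ γ (dist x y) = y ∧
      (∀ s ∈ Icc (0:ℝ) (dist x y), ∀ t ∈ Icc (0:ℝ) (dist x y),
        dist (γ s) (γ t) = |s - t|) := by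
  classical
  obtain ⟨hcomp, hmid, hcn⟩ := hX
  haveI := hcomp
  obtain ⟨d, hd⟩ : ∃ d' : ℝ, d' = dist x y := ⟨_, rfl⟩
  rw [← hd]
  have hdnn : (0:ℝ) ≤ d := by rw [hd]; exact dist_nonneg
  rcases eq_or_lt_of_le hdnn with hd0 | hdpos
  · have hdist0 : dist x y = 0 := by rw [← hd]; exact hd0.symm
    have hxy : x = y := dist_eq_zero.mp hdist0
    refine ⟨fun _ => x, rfl, hxy, ?_⟩
    intro s hs t ht
    rw [← hd0] at hs ht
    have hs0 : s = 0 := le_antisymm hs.2 hs.1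
    have ht0 : t = 0 := le_antisymm ht.2 ht.1
    simp [hs0, ht0]
  -- main case d > 0
  set P : ℝ → X → Prop := fun l z => dist x z = l * d ∧ dist y z = (1 - l) * d with hP
  have lip : ∀ l l' : ℝ, ∀ z z' : X, l ∈ Icc (0:ℝ) 1 → l' ∈ Icc (0:ℝ) 1 →
      P l z → P l' z' → dist z z' ≤ |l - l'| * d := by
    intro l l' z z' hl hl' hz hz'
    obtain ⟨m, hm1, hm2⟩ := hmid z z'
    have c1 := hcn z z' x m ⟨hm1, hm2⟩
    have c2 := hcn z z' y m ⟨hm1, hm2⟩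
    rw [hz.1, hz'.1] at c1
    rw [hz.2, hz'.2] at c2
    have tri : d ≤ dist x m + dist y m := by
      rw [hd]; exact (dist_triangle x m y).trans (by rw [dist_comm m y])
    have A0 : (0:ℝ) ≤ dist x m := dist_nonneg
    have B0 : (0:ℝ) ≤ dist y m := dist_nonneg
    by_contra hcon
    push_neg at hcon
    have h1 : 0 ≤ |l - l'| * d := mul_nonneg (abs_nonneg _) (le_of_lt hdpos)
    have ht : (l - l') ^ 2 * d ^ 2 < dist z z' ^ 2 := by
      calc (l - l') ^ 2 * d ^ 2 = (|l - l'| * d) ^ 2 := by rw [mul_pow, sq_abs]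
        _ < dist z z' ^ 2 := by nlinarith
    have hA2 : dist x m ^ 2 < ((l + l') / 2) ^ 2 * d ^ 2 := by nlinarith
    have hB2 : dist y m ^ 2 < (1 - (l + l') / 2) ^ 2 * d ^ 2 := by nlinarith
    have hν0 : 0 ≤ (l + l') / 2 := by linarith [hl.1, hl'.1]
    have hν1 : (l + l') / 2 ≤ 1 := by linarith [hl.2, hl'.2]
    have hA : dist x m < ((l + l') / 2) * d :=
      lt_of_pow_lt_pow_left₀ 2 (mul_nonneg hν0 (le_of_lt hdpos))
        (by rw [mul_pow]; exact hA2)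
    have hB : dist y m < (1 - (l + l') / 2) * d :=
      lt_of_pow_lt_pow_left₀ 2
        (mul_nonneg (by linarith : (0:ℝ) ≤ 1 - (l + l') / 2) (le_of_lt hdpos))
        (by rw [mul_pow]; exact hB2)
    linarith
  have key : ∀ l l' : ℝ, l ∈ Icc (0:ℝ) 1 → l' ∈ Icc (0:ℝ) 1 →
      (∃ z, P l z) → (∃ z, P l' z) → ∃ m, P ((l + l') / 2) m := by
    intro l l' hl hl' hze hze'
    obtain ⟨z, hz⟩ := hze
    obtain ⟨z', hz'⟩ := hze'
    obtain ⟨m, hm1, hm2⟩ := hmid z z'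
    have c1 := hcn z z' x m ⟨hm1, hm2⟩
    have c2 := hcn z z' y m ⟨hm1, hm2⟩
    rw [hz.1, hz'.1] at c1
    rw [hz.2, hz'.2] at c2
    have hlip := lip l l' z z' hl hl' hz hz'
    have hlow : |l - l'| * d ≤ dist z z' := by
      have h1 := abs_dist_sub_le z z' x
      rw [dist_comm z x, dist_comm z' x, hz.1, hz'.1, ← sub_mul, abs_mul,
        abs_of_pos hdpos] at h1
      exact h1
    have he2 : dist z z' ^ 2 = (l - l') ^ 2 * d ^ 2 := by
      rw [le_antisymm hlip hlow, mul_pow, sq_abs]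
    have hA2 : dist x m ^ 2 ≤ ((l + l') / 2) ^ 2 * d ^ 2 := by nlinarith
    have hB2 : dist y m ^ 2 ≤ (1 - (l + l') / 2) ^ 2 * d ^ 2 := by nlinarith
    have hν0 : 0 ≤ (l + l') / 2 := by linarith [hl.1, hl'.1]
    have hν1 : (l + l') / 2 ≤ 1 := by linarith [hl.2, hl'.2]
    have hA : dist x m ≤ ((l + l') / 2) * d :=
      le_of_pow_le_pow_left₀ two_ne_zero (mul_nonneg hν0 (le_of_lt hdpos))
        (by rw [mul_pow]; exact hA2)
    have hB : dist y m ≤ (1 - (l + l') / 2) * d :=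
      le_of_pow_le_pow_left₀ two_ne_zero
        (mul_nonneg (by linarith : (0:ℝ) ≤ 1 - (l + l') / 2) (le_of_lt hdpos))
        (by rw [mul_pow]; exact hB2)
    have tri : d ≤ dist x m + dist y m := by
      rw [hd]; exact (dist_triangle x m y).trans (by rw [dist_comm m y])
    exact ⟨m, by constructor <;> linarith⟩
  have dyadic : ∀ n : ℕ, ∀ k : ℕ, k ≤ 2 ^ n → ∃ z, P ((k : ℝ) / 2 ^ n) z := by
    intro n
    induction n with
    | zero =>
      intro k hk
      interval_cases k
      · exact ⟨x, by simp [hP, hd, dist_comm]⟩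
      · exact ⟨y, by simp [hP, hd, dist_comm]⟩
    | succ n ih =>
      intro k hk
      rcases Nat.even_or_odd k with ⟨j, hj⟩ | ⟨j, hj⟩
      · have hj2 : j ≤ 2 ^ n := by omega
        obtain ⟨z, hz⟩ := ih j hj2
        refine ⟨z, ?_⟩
        have heq : ((k : ℝ) / 2 ^ (n + 1)) = (j : ℝ) / 2 ^ n := by
          subst hj; push_cast; ring
        rw [heq]; exact hz
      · have hj2 : j ≤ 2 ^ n := by omega
        have hj3 : j + 1 ≤ 2 ^ n := by
          have : 1 ≤ 2 ^ n := Nat.one_le_two_pow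
          omega
        have hmem : ∀ i : ℕ, i ≤ 2 ^ n → ((i : ℝ) / 2 ^ n) ∈ Icc (0:ℝ) 1 := by
          intro i hi
          refine ⟨by positivity, ?_⟩
          rw [div_le_one (by positivity)]
          exact_mod_cast hi
        obtain ⟨z1, hz1⟩ := ih j hj2
        obtain ⟨z2, hz2⟩ := ih (j + 1) hj3
        have hz2' : P (((j : ℝ) + 1) / 2 ^ n) z2 := by
          have : (((j : ℕ) + 1 : ℕ) : ℝ) = (j : ℝ) + 1 := by push_cast; ring
          rwa [this] at hz2
        have hmem' : (((j : ℝ) + 1) / 2 ^ n) ∈ Icc (0:ℝ) 1 := by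
          have := hmem (j + 1) hj3
          have hc : (((j : ℕ) + 1 : ℕ) : ℝ) = (j : ℝ) + 1 := by push_cast; ring
          rwa [hc] at this
        obtain ⟨m, hm⟩ := key ((j : ℝ) / 2 ^ n) (((j : ℝ) + 1) / 2 ^ n)
          (hmem j hj2) hmem' ⟨z1, hz1⟩ ⟨z2, hz2'⟩
        refine ⟨m, ?_⟩
        have heq : ((k : ℝ) / 2 ^ (n + 1)) = ((j : ℝ) / 2 ^ n + ((j : ℝ) + 1) / 2 ^ n) / 2 := by
          subst hj; push_cast; ring
        rw [heq]; exact hm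
  have hparam : ∀ l ∈ Icc (0:ℝ) 1, ∀ n : ℕ,
      ((⌊l * 2 ^ n⌋₊ : ℝ) / 2 ^ n) ∈ Icc (0:ℝ) 1 ∧ ⌊l * 2 ^ n⌋₊ ≤ 2 ^ n ∧
        |((⌊l * 2 ^ n⌋₊ : ℝ) / 2 ^ n) - l| ≤ 1 / 2 ^ n := by
    intro l hl n
    have h2n : (0:ℝ) < 2 ^ n := by positivity
    have hfl : (⌊l * 2 ^ n⌋₊ : ℝ) ≤ l * 2 ^ n := Nat.floor_le (by nlinarith [hl.1])
    have hfl2 : l * 2 ^ n < (⌊l * 2 ^ n⌋₊ : ℝ) + 1 := Nat.lt_floor_add_one _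
    have hk : ⌊l * 2 ^ n⌋₊ ≤ 2 ^ n := by
      have h2 : l * 2 ^ n ≤ ((2 ^ n : ℕ) : ℝ) := by push_cast; nlinarith [hl.2]
      exact Nat.floor_le_of_le h2
    have hpos : (0:ℝ) < 1 / 2 ^ n := by positivity
    refine ⟨⟨by positivity, ?_⟩, hk, ?_⟩
    · rw [div_le_one h2n]
      calc (⌊l * 2 ^ n⌋₊ : ℝ) ≤ l * 2 ^ n := hfl
        _ ≤ 2 ^ n := by nlinarith [hl.2]
    · rw [abs_le]
      have hup : (⌊l * 2 ^ n⌋₊ : ℝ) / 2 ^ n ≤ l := by rw [div_le_iff₀ h2n]; linarith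
      have hdown : l ≤ ((⌊l * 2 ^ n⌋₊ : ℝ) + 1) / 2 ^ n := by
        rw [le_div_iff₀ h2n]; linarith
      have hsplit : ((⌊l * 2 ^ n⌋₊ : ℝ) + 1) / 2 ^ n
          = (⌊l * 2 ^ n⌋₊ : ℝ) / 2 ^ n + 1 / 2 ^ n := by ring
      constructor <;> [skip; linarith]
      rw [hsplit] at hdown
      linarith
  have hhalf : Tendsto (fun n : ℕ => (1:ℝ) / 2 ^ n) atTop (𝓝 0) := by
    simp only [one_div]
    exact tendsto_inv_atTop_zero.comp (tendsto_pow_atTop_atTop_of_one_lt one_lt_two)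
  have all : ∀ l ∈ Icc (0:ℝ) 1, ∃ z, P l z := by
    intro l hl
    set k : ℕ → ℕ := fun n => ⌊l * 2 ^ n⌋₊ with hkdef
    have hwit : ∀ n : ℕ, ∃ z, P ((k n : ℝ) / 2 ^ n) z := fun n =>
      dyadic n (k n) (hparam l hl n).2.1
    choose zs hzs using hwit
    have hlip2 : ∀ n m' : ℕ, dist (zs n) (zs m') ≤ (1 / 2 ^ n + 1 / 2 ^ m') * d := by
      intro n m'
      refine (lip ((k n : ℝ) / 2 ^ n) ((k m' : ℝ) / 2 ^ m') (zs n) (zs m')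
        (hparam l hl n).1 (hparam l hl m').1 (hzs n) (hzs m')).trans ?_
      have h1 := (hparam l hl n).2.2
      have h2 := (hparam l hl m').2.2
      have habs : |(k n : ℝ) / 2 ^ n - (k m' : ℝ) / 2 ^ m'| ≤ 1 / 2 ^ n + 1 / 2 ^ m' := by
        calc |(k n : ℝ) / 2 ^ n - (k m' : ℝ) / 2 ^ m'|
            = |((k n : ℝ) / 2 ^ n - l) + (l - (k m' : ℝ) / 2 ^ m')| := by ring_nf
          _ ≤ |(k n : ℝ) / 2 ^ n - l| + |l - (k m' : ℝ) / 2 ^ m'| := abs_add_le _ _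
          _ ≤ 1 / 2 ^ n + 1 / 2 ^ m' := by
              rw [abs_sub_comm l _]; exact add_le_add h1 h2
      exact mul_le_mul_of_nonneg_right habs (le_of_lt hdpos)
    have hcauchy : CauchySeq zs := by
      rw [Metric.cauchySeq_iff']
      intro ε hε
      obtain ⟨N, hN⟩ := pow_unbounded_of_one_lt (2 * d / ε) (one_lt_two (α := ℝ))
      refine ⟨N, fun n hn => ?_⟩
      have h2N : (0:ℝ) < 2 ^ N := by positivity
      have h2n : (0:ℝ) < 2 ^ n := by positivity
      have hmono : (2:ℝ) ^ N ≤ 2 ^ n := pow_le_pow_right₀ one_le_two hn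
      calc dist (zs n) (zs N) ≤ (1 / 2 ^ n + 1 / 2 ^ N) * d := hlip2 n N
        _ ≤ (1 / 2 ^ N + 1 / 2 ^ N) * d := by
            have hle : (1:ℝ) / 2 ^ n ≤ 1 / 2 ^ N :=
              div_le_div_of_nonneg_left one_pos.le h2N hmono
            exact mul_le_mul_of_nonneg_right (by linarith) (le_of_lt hdpos)
        _ = 2 * d / 2 ^ N := by ring
        _ < ε := by
            rw [div_lt_iff₀ h2N]
            calc 2 * d = (2 * d / ε) * ε := by field_simp
              _ < 2 ^ N * ε := mul_lt_mul_of_pos_right hN hε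
              _ = ε * 2 ^ N := mul_comm _ _
    obtain ⟨z, hz⟩ := cauchySeq_tendsto_of_complete hcauchy
    have hsq : ∀ n : ℕ, |(k n : ℝ) / 2 ^ n - l| ≤ 1 / 2 ^ n := fun n => (hparam l hl n).2.2
    have h5 : Tendsto (fun n => (k n : ℝ) / 2 ^ n) atTop (𝓝 l) :=
      tendsto_sub_nhds_zero_iff.mp (squeeze_zero_norm hsq hhalf)
    refine ⟨z, ?_, ?_⟩
    · have h1 : Tendsto (fun n => dist x (zs n)) atTop (𝓝 (dist x z)) :=
        (continuous_const.dist continuous_id).continuousAt.tendsto.comp hz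
      have h2 : Tendsto (fun n => ((k n : ℝ) / 2 ^ n) * d) atTop (𝓝 (l * d)) :=
        h5.mul_const d
      exact tendsto_nhds_unique (h1.congr fun n => (hzs n).1) h2
    · have h1 : Tendsto (fun n => dist y (zs n)) atTop (𝓝 (dist y z)) :=
        (continuous_const.dist continuous_id).continuousAt.tendsto.comp hz
      have h2 : Tendsto (fun n => (1 - (k n : ℝ) / 2 ^ n) * d) atTop (𝓝 ((1 - l) * d)) :=
        (tendsto_const_nhds.sub h5).mul_const d
      exact tendsto_nhds_unique (h1.congr fun n => (hzs n).2) h2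
  set w : ℝ → X := fun l => if h : ∃ z, P l z then h.choose else x with hw
  have hwspec : ∀ l ∈ Icc (0:ℝ) 1, P l (w l) := by
    intro l hl
    have h := all l hl
    simp only [hw, dif_pos h]
    exact h.choose_spec
  refine ⟨fun t => w (t / d), ?_, ?_, ?_⟩
  · show w (0 / d) = x
    have h := hwspec 0 ⟨le_refl _, zero_le_one⟩
    have h0 : dist x (w 0) = 0 := by rw [h.1]; ring
    rw [zero_div]
    exact (dist_eq_zero.mp h0).symm
  · show w (d / d) = y
    have h := hwspec 1 ⟨zero_le_one, le_refl _⟩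
    have h0 : dist y (w 1) = 0 := by rw [h.2]; ring
    rw [div_self (ne_of_gt hdpos)]
    exact (dist_eq_zero.mp h0).symm
  · intro s hs t ht
    show dist (w (s / d)) (w (t / d)) = |s - t|
    have hsl : s / d ∈ Icc (0:ℝ) 1 :=
      ⟨div_nonneg hs.1 (le_of_lt hdpos), (div_le_one hdpos).mpr hs.2⟩
    have htl : t / d ∈ Icc (0:ℝ) 1 :=
      ⟨div_nonneg ht.1 (le_of_lt hdpos), (div_le_one hdpos).mpr ht.2⟩
    have hws := hwspec _ hsl
    have hwt := hwspec _ htl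
    apply le_antisymm
    · refine (lip (s / d) (t / d) (w (s / d)) (w (t / d)) hsl htl hws hwt).trans
        (le_of_eq ?_)
      rw [div_sub_div_same, abs_div, abs_of_pos hdpos, div_mul_cancel₀ _ (ne_of_gt hdpos)]
    · have h1 := abs_dist_sub_le (w (s / d)) (w (t / d)) x
      rw [dist_comm (w (s / d)) x, dist_comm (w (t / d)) x, hws.1, hwt.1] at h1
      have hs' : s / d * d = s := div_mul_cancel₀ _ (ne_of_gt hdpos)
      have ht' : t / d * d = t := div_mul_cancel₀ _ (ne_of_gt hdpos)
      rw [hs', ht'] at h1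
      exact h1

end part3

section part4
variable {X : Type*} [MetricSpace X]

lemma exists_geodesic (hX : IsCAT0 X) (x y : X) :
    ∃ G : Set X, IsGeodesicSegmentFrom x G ∧ IsGeodesicSegmentFrom y G ∧
      x ∈ G ∧ y ∈ G := by
  obtain ⟨γ, h0, hdy, hiso⟩ := exists_geodesic_fun hX x y
  set d := dist x y with hd
  have hdnn : (0:ℝ) ≤ d := dist_nonneg
  refine ⟨γ '' Icc 0 d, ⟨d, γ, hdnn, h0, hiso, rfl⟩, ?_, ?_, ?_⟩
  · refine ⟨d, fun t => γ (d - t), hdnn, by simpa using hdy, ?_, ?_⟩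
    · intro s hs t ht
      have hs' : d - s ∈ Icc (0:ℝ) d := ⟨by linarith [hs.2], by linarith [hs.1]⟩
      have ht' : d - t ∈ Icc (0:ℝ) d := ⟨by linarith [ht.2], by linarith [ht.1]⟩
      rw [hiso _ hs' _ ht']
      rw [show d - s - (d - t) = -(s - t) by ring, abs_neg]
    · ext z
      constructor
      · rintro ⟨t, ht, rfl⟩
        exact ⟨d - t, ⟨by linarith [ht.2], by linarith [ht.1]⟩, by
          show γ (d - (d - t)) = γ t
          rw [sub_sub_cancel]⟩
      · rintro ⟨t, ht, rfl⟩
        exact ⟨d - t, ⟨by linarith [ht.2], by linarith [ht.1]⟩, rfl⟩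
  · exact ⟨0, ⟨le_refl _, hdnn⟩, h0⟩
  · exact ⟨d, ⟨hdnn, le_refl _⟩, hdy⟩

lemma weakConv_const (hX : IsCAT0 X) {a y : X}
    (h : WeakConv (fun _ : ℕ => a) y) : a = y := by
  obtain ⟨G, hGy, _, _, haG⟩ := exists_geodesic hX y a
  have hna : IsNearestPoint a G a := ⟨haG, fun q hq => by
    rw [dist_self]; exact dist_nonneg⟩
  have ht := h G hGy (fun _ => a) (fun _ => hna)
  exact (tendsto_nhds_unique ht tendsto_const_nhds).symm

lemma weakConv_unique (hX : IsCAT0 X) {u : ℕ → X} {y z : X}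
    (hy : WeakConv u y) (hz : WeakConv u z) : y = z := by
  obtain ⟨G, hGy, hGz, _, _⟩ := exists_geodesic hX y z
  choose p hp using fun n => exists_nearest hGy (u n)
  exact tendsto_nhds_unique (hy G hGy p hp) (hz G hGz p hp)

end part4

section part5
variable {X : Type*} [MetricSpace X]

/-- limsup of squared distances to a sequence. -/
noncomputable def Rfun (u : ℕ → X) (y : X) : ℝ :=
  limsup (fun n => dist y (u n) ^ 2) atTop

/-- squared asymptotic radius. -/
noncomputable def rad (u : ℕ → X) : ℝ := sInf (Set.range (Rfun u))

lemma dist_bound_of_bounded {u : ℕ → X} (hb : Bornology.IsBounded (Set.range u)) :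
    ∃ C : ℝ, 0 ≤ C ∧ ∀ m n, dist (u m) (u n) ≤ C := by
  obtain ⟨C, hC⟩ := Metric.isBounded_range_iff.mp hb
  exact ⟨max C 0, le_max_right _ _, fun m n => (hC m n).trans (le_max_left _ _)⟩

lemma sq_bounded {u : ℕ → X} (hb : Bornology.IsBounded (Set.range u)) (y : X) :
    IsBoundedUnder (· ≤ ·) atTop (fun n => dist y (u n) ^ 2) := by
  obtain ⟨C, hC0, hC⟩ := dist_bound_of_bounded hb
  refine isBoundedUnder_of ⟨(dist y (u 0) + C) ^ 2, fun n => ?_⟩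
  have h1 : dist y (u n) ≤ dist y (u 0) + C := by
    calc dist y (u n) ≤ dist y (u 0) + dist (u 0) (u n) := dist_triangle _ _ _
      _ ≤ dist y (u 0) + C := by linarith [hC 0 n]
  have h0 : (0:ℝ) ≤ dist y (u n) := dist_nonneg
  nlinarith

lemma sq_cobounded (f : ℕ → ℝ) (h0 : ∀ n, 0 ≤ f n) :
    IsCoboundedUnder (· ≤ ·) atTop f :=
  isCoboundedUnder_le_of_eventually_le atTop (Eventually.of_forall h0)

lemma Rfun_nonneg {u : ℕ → X} (hb : Bornology.IsBounded (Set.range u)) (y : X) :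
    0 ≤ Rfun u y :=
  le_limsup_of_frequently_le
    (Eventually.frequently (Eventually.of_forall fun n => sq_nonneg _)) (sq_bounded hb y)

lemma limsup_avg_le {f a b : ℕ → ℝ} {c : ℝ} (hf0 : ∀ n, 0 ≤ f n)
    (ha : IsBoundedUnder (· ≤ ·) atTop a) (hbb : IsBoundedUnder (· ≤ ·) atTop b)
    (h : ∀ n, f n ≤ a n / 2 + b n / 2 + c) :
    limsup f atTop ≤ limsup a atTop / 2 + limsup b atTop / 2 + c := by
  refine le_of_forall_pos_le_add fun ε hε => ?_
  have hea : ∀ᶠ n in atTop, a n < limsup a atTop + ε :=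
    eventually_lt_of_limsup_lt (by linarith) ha
  have heb : ∀ᶠ n in atTop, b n < limsup b atTop + ε :=
    eventually_lt_of_limsup_lt (by linarith) hbb
  refine limsup_le_of_le (sq_cobounded f hf0) ?_
  filter_upwards [hea, heb] with n h1 h2
  have := h n
  linarith

lemma limsup_comp_le {f : ℕ → ℝ} {φ : ℕ → ℕ} (hφ : StrictMono φ)
    (h0 : ∀ n, 0 ≤ f n) (hbd : IsBoundedUnder (· ≤ ·) atTop f) :
    limsup (fun n => f (φ n)) atTop ≤ limsup f atTop := by
  refine le_of_forall_pos_le_add fun ε hε => ?_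
  have he : ∀ᶠ n in atTop, f n < limsup f atTop + ε :=
    eventually_lt_of_limsup_lt (by linarith) hbd
  have he2 : ∀ᶠ n in atTop, f (φ n) < limsup f atTop + ε :=
    hφ.tendsto_atTop.eventually he
  exact limsup_le_of_le (sq_cobounded _ fun n => h0 _) (he2.mono fun n h => le_of_lt h)

lemma limsup_shift {f : ℕ → ℝ} (k : ℕ) (h0 : ∀ n, 0 ≤ f n)
    (hbd : IsBoundedUnder (· ≤ ·) atTop f) :
    limsup (fun n => f (n + k)) atTop = limsup f atTop := by
  refine le_antisymm
    (limsup_comp_le (fun a b hab => by dsimp only; omega : StrictMono (fun n => n + k))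
      h0 hbd) ?_
  refine le_of_forall_pos_le_add fun ε hε => ?_
  have hbd2 : IsBoundedUnder (· ≤ ·) atTop (fun n => f (n + k)) := by
    obtain ⟨M, hM⟩ := hbd
    rw [eventually_map] at hM
    refine ⟨M, ?_⟩
    rw [eventually_map]
    exact ((tendsto_add_atTop_nat k).eventually hM)
  have he : ∀ᶠ n in atTop, f (n + k) < limsup (fun n => f (n + k)) atTop + ε :=
    eventually_lt_of_limsup_lt (by linarith) hbd2
  rw [eventually_atTop] at he
  obtain ⟨N, hN⟩ := he
  refine limsup_le_of_le (sq_cobounded f h0) ?_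
  rw [eventually_atTop]
  refine ⟨N + k, fun m hm => ?_⟩
  have := hN (m - k) (by omega)
  have hmk : m - k + k = m := by omega
  rw [hmk] at this
  exact le_of_lt this

lemma rad_bddBelow {u : ℕ → X} (hb : Bornology.IsBounded (Set.range u)) :
    BddBelow (Set.range (Rfun u)) := by
  refine ⟨0, fun v hv => ?_⟩
  obtain ⟨z, rfl⟩ := hv
  exact Rfun_nonneg hb z

lemma rad_le {u : ℕ → X} (hb : Bornology.IsBounded (Set.range u)) (y : X) :
    rad u ≤ Rfun u y :=
  csInf_le (rad_bddBelow hb) (Set.mem_range_self y)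

lemma rad_nonneg {u : ℕ → X} (hb : Bornology.IsBounded (Set.range u)) :
    0 ≤ rad u := by
  refine le_csInf ⟨Rfun u (u 0), Set.mem_range_self _⟩ fun v hv => ?_
  obtain ⟨z, rfl⟩ := hv
  exact Rfun_nonneg hb z

lemma exists_Rfun_lt {u : ℕ → X} {ε : ℝ} (hε : 0 < ε) :
    ∃ y, Rfun u y < rad u + ε := by
  have h : sInf (Set.range (Rfun u)) < rad u + ε := by
    show rad u < rad u + ε
    linarith
  obtain ⟨v, hvmem, hv⟩ :=
    exists_lt_of_csInf_lt ⟨Rfun u (u 0), Set.mem_range_self _⟩ h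
  obtain ⟨y, rfl⟩ := hvmem
  exact ⟨y, hv⟩

lemma Rfun_midpoint
    (hcn : ∀ x y z m : X, IsMidpoint x y m →
      dist z m ^ 2 ≤ dist z x ^ 2 / 2 + dist z y ^ 2 / 2 - dist x y ^ 2 / 4)
    {u : ℕ → X} (hb : Bornology.IsBounded (Set.range u)) {y z m : X}
    (hm : IsMidpoint y z m) :
    Rfun u m ≤ Rfun u y / 2 + Rfun u z / 2 - dist y z ^ 2 / 4 := by
  have h : ∀ n, dist m (u n) ^ 2 ≤
      dist y (u n) ^ 2 / 2 + dist z (u n) ^ 2 / 2 + (- (dist y z ^ 2 / 4)) := by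
    intro n
    have := hcn y z (u n) m hm
    rw [dist_comm (u n) m, dist_comm (u n) y, dist_comm (u n) z] at this
    linarith
  have := limsup_avg_le (fun n => sq_nonneg _) (sq_bounded hb y) (sq_bounded hb z) h
  simpa [Rfun, sub_eq_add_neg] using this

lemma exists_center (hX : IsCAT0 X) {u : ℕ → X}
    (hb : Bornology.IsBounded (Set.range u)) :
    ∃ c : X, Rfun u c = rad u := by
  obtain ⟨hcomp, hmid, hcn⟩ := hX
  haveI := hcomp
  -- minimizing sequence
  have hsel : ∀ k : ℕ, ∃ y : X, Rfun u y < rad u + 1 / (k + 1) :=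
    fun k => exists_Rfun_lt (by positivity)
  choose ys hys using hsel
  have hdistsq : ∀ k l : ℕ, dist (ys k) (ys l) ^ 2 ≤ 2 / (k + 1) + 2 / (l + 1) := by
    intro k l
    obtain ⟨m, hm1, hm2⟩ := hmid (ys k) (ys l)
    have h1 := Rfun_midpoint hcn hb (⟨hm1, hm2⟩ : IsMidpoint (ys k) (ys l) m)
    have h2 := rad_le hb m
    have h3 := hys k
    have h4 := hys l
    have e1 : (2:ℝ) / ((k:ℝ) + 1) = 2 * (1 / ((k:ℝ) + 1)) := by ring
    have e2 : (2:ℝ) / ((l:ℝ) + 1) = 2 * (1 / ((l:ℝ) + 1)) := by ring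
    linarith
  have hcauchy : CauchySeq ys := by
    rw [Metric.cauchySeq_iff']
    intro ε hε
    obtain ⟨N, hN⟩ := exists_nat_gt (4 / ε ^ 2)
    refine ⟨N, fun n hn => ?_⟩
    have h1 := hdistsq n N
    have h2 : (2:ℝ) / (n + 1) ≤ 2 / (N + 1) := by
      apply div_le_div_of_nonneg_left (by norm_num) (by positivity)
      exact_mod_cast Nat.add_le_add_right hn 1
    have h3 : (4:ℝ) / (N + 1) < ε ^ 2 := by
      rw [div_lt_iff₀ (by positivity)]
      have hN1 : (4:ℝ) / ε ^ 2 < N + 1 := by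
        calc (4:ℝ) / ε ^ 2 < N := hN
          _ ≤ N + 1 := by linarith
      calc (4:ℝ) = (4 / ε ^ 2) * ε ^ 2 := by field_simp
        _ < (N + 1) * ε ^ 2 := by
            apply mul_lt_mul_of_pos_right hN1 (by positivity)
        _ = ε ^ 2 * (N + 1) := mul_comm _ _
    have : dist (ys n) (ys N) ^ 2 < ε ^ 2 := by
      have e3 : (4:ℝ) / ((N:ℝ) + 1) = 2 / ((N:ℝ) + 1) + 2 / ((N:ℝ) + 1) := by ring
      calc dist (ys n) (ys N) ^ 2 ≤ 2 / (n + 1) + 2 / (N + 1) := h1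
        _ ≤ 4 / (N + 1) := by linarith
        _ < ε ^ 2 := h3
    exact lt_of_pow_lt_pow_left₀ 2 (le_of_lt hε) this
  obtain ⟨c, hc⟩ := cauchySeq_tendsto_of_complete hcauchy
  refine ⟨c, le_antisymm ?_ (rad_le hb c)⟩
  -- continuity estimate
  obtain ⟨C, hC0, hC⟩ := dist_bound_of_bounded hb
  set K : ℝ := dist c (u 0) + C with hK
  have hK0 : 0 ≤ K := by positivity
  have hRc : ∀ k : ℕ, Rfun u c ≤ rad u + 1 / (k + 1) +
      (2 * dist c (ys k) * (dist c (ys k) + K) + dist c (ys k) ^ 2) := by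
    intro k
    set δ := dist c (ys k) with hδ
    have hδ0 : 0 ≤ δ := dist_nonneg
    have hpt : ∀ n, dist c (u n) ^ 2 ≤ dist (ys k) (u n) ^ 2 / 2 +
        dist (ys k) (u n) ^ 2 / 2 + (2 * δ * (δ + K) + δ ^ 2) := by
      intro n
      have h1 : dist c (u n) ≤ δ + dist (ys k) (u n) := by
        rw [hδ]; exact dist_triangle _ _ _
      have h2 : dist (ys k) (u n) ≤ δ + K := by
        calc dist (ys k) (u n) ≤ dist (ys k) c + dist c (u 0) + dist (u 0) (u n) := by
              linarith [dist_triangle (ys k) c (u n), dist_triangle c (u 0) (u n)]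
          _ ≤ δ + K := by
              rw [dist_comm (ys k) c, hK]
              linarith [hC 0 n]
      have h3 : (0:ℝ) ≤ dist (ys k) (u n) := dist_nonneg
      have h4 : (0:ℝ) ≤ dist c (u n) := dist_nonneg
      nlinarith
    have := limsup_avg_le (fun n => sq_nonneg _) (sq_bounded hb (ys k))
      (sq_bounded hb (ys k)) hpt
    have h5 : limsup (fun n => dist (ys k) (u n) ^ 2) atTop = Rfun u (ys k) := rfl
    have h6 := hys k
    calc Rfun u c ≤ Rfun u (ys k) / 2 + Rfun u (ys k) / 2 +
        (2 * δ * (δ + K) + δ ^ 2) := this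
      _ ≤ rad u + 1 / (k + 1) + (2 * δ * (δ + K) + δ ^ 2) := by linarith
  -- pass to the limit
  refine le_of_forall_pos_le_add fun ε hε => ?_
  have hδt : Tendsto (fun k => dist c (ys k)) atTop (𝓝 0) := by
    have h := (tendsto_const_nhds (x := c)).dist hc
    simpa using h
  have haux : Tendsto (fun k : ℕ => 1 / ((k : ℝ) + 1) +
      (2 * dist c (ys k) * (dist c (ys k) + K) + dist c (ys k) ^ 2)) atTop (𝓝 0) := by
    have h1 : Tendsto (fun k : ℕ => 1 / ((k : ℝ) + 1)) atTop (𝓝 0) :=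
      tendsto_one_div_add_atTop_nhds_zero_nat
    have h2 : Tendsto (fun k : ℕ => 2 * dist c (ys k) * (dist c (ys k) + K) +
        dist c (ys k) ^ 2) atTop (𝓝 (2 * 0 * (0 + K) + 0 ^ 2)) := by
      apply Tendsto.add
      · exact (tendsto_const_nhds.mul hδt).mul (hδt.add tendsto_const_nhds)
      · exact hδt.pow 2
    have h3 : (2:ℝ) * 0 * (0 + K) + 0 ^ 2 = 0 := by ring
    rw [h3] at h2
    simpa using h1.add h2
  have := haux.eventually (eventually_lt_nhds hε)
  obtain ⟨k, hk⟩ := this.exists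
  have := hRc k
  linarith
end part5

section part6
variable {X : Type*} [MetricSpace X]

set_option maxHeartbeats 1000000 in
lemma delta_compact (hX : IsCAT0 X) {u : ℕ → X}
    (hb : Bornology.IsBounded (Set.range u)) :
    ∃ φ : ℕ → ℕ, StrictMono φ ∧ ∃ c : X, WeakConv (u ∘ φ) c := by
  classical
  obtain ⟨hcomp, hmid, hcn⟩ := id hX
  have hsub : ∀ (s : ℕ → X) (ψ : ℕ → ℕ), Bornology.IsBounded (Set.range s) →
      Bornology.IsBounded (Set.range (s ∘ ψ)) :=
    fun s ψ hs => hs.subset (Set.range_comp_subset_range ψ s)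
  set σ : (ℕ → X) → ℝ := fun s =>
    sInf (Set.range (fun ψ : {ψ : ℕ → ℕ // StrictMono ψ} => rad (s ∘ ψ.1))) with hσdef
  have hσ_le : ∀ s : ℕ → X, Bornology.IsBounded (Set.range s) →
      ∀ ψ : ℕ → ℕ, StrictMono ψ → σ s ≤ rad (s ∘ ψ) := by
    intro s hs ψ hψ
    refine csInf_le ⟨0, ?_⟩ ⟨⟨ψ, hψ⟩, rfl⟩
    rintro b ⟨χ, rfl⟩
    exact rad_nonneg (hsub s χ.1 hs)
  have hσ_pick : ∀ s : ℕ → X, Bornology.IsBounded (Set.range s) → ∀ ε : ℝ, 0 < ε →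
      ∃ ψ : {ψ : ℕ → ℕ // StrictMono ψ}, rad (s ∘ ψ.1) < σ s + ε := by
    intro s hs ε hε
    have hne : (Set.range
        (fun ψ : {ψ : ℕ → ℕ // StrictMono ψ} => rad (s ∘ ψ.1))).Nonempty :=
      ⟨rad (s ∘ id), ⟨⟨id, strictMono_id⟩, rfl⟩⟩
    have h : σ s < σ s + ε := by linarith
    obtain ⟨b, hbmem, hblt⟩ := exists_lt_of_csInf_lt hne h
    obtain ⟨ψ, rfl⟩ := hbmem
    exact ⟨ψ, hblt⟩
  have pickex : ∀ (s : ℕ → X) (k : ℕ), ∃ ψ : {ψ : ℕ → ℕ // StrictMono ψ},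
      (Bornology.IsBounded (Set.range s) →
        rad (s ∘ ψ.1) < σ s + 1 / (k + 1)) := by
    intro s k
    by_cases hs : Bornology.IsBounded (Set.range s)
    · obtain ⟨ψ, hψ⟩ := hσ_pick s hs (1 / (k + 1)) (by positivity)
      exact ⟨ψ, fun _ => hψ⟩
    · exact ⟨⟨id, strictMono_id⟩, fun h => absurd h hs⟩
  choose pick pickspec using pickex
  set Φ : ℕ → {ψ : ℕ → ℕ // StrictMono ψ} :=
    fun k => Nat.rec ⟨id, strictMono_id⟩
      (fun k φ => ⟨φ.1 ∘ (pick (u ∘ φ.1) k).1, φ.2.comp (pick (u ∘ φ.1) k).2⟩) k with hΦ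
  have hΦsucc : ∀ k, (Φ (k + 1)).1 = (Φ k).1 ∘ (pick (u ∘ (Φ k).1) k).1 := fun k => rfl
  have hΦb : ∀ k, Bornology.IsBounded (Set.range (u ∘ (Φ k).1)) :=
    fun k => hsub u (Φ k).1 hb
  have hrad : ∀ k, rad (u ∘ (Φ (k + 1)).1) < σ (u ∘ (Φ k).1) + 1 / (k + 1) := by
    intro k
    exact pickspec (u ∘ (Φ k).1) k (hΦb k)
  set δ : ℕ → ℕ := fun n => (Φ n).1 n with hδdef
  have hδmono : StrictMono δ := by
    apply strictMono_nat_of_lt_succ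
    intro n
    have h1 : (n + 1 : ℕ) ≤ (pick (u ∘ (Φ n).1) n).1 (n + 1) :=
      (pick (u ∘ (Φ n).1) n).2.le_apply
    calc δ n = (Φ n).1 n := rfl
      _ < (Φ n).1 ((pick (u ∘ (Φ n).1) n).1 (n + 1)) := (Φ n).2 (by omega)
      _ = δ (n + 1) := rfl
  have tail : ∀ k : ℕ, ∃ D : ℕ → ℕ, StrictMono D ∧ ∀ m, δ (k + m) = (Φ k).1 (D m) := by
    intro k
    set T : ℕ → {ψ : ℕ → ℕ // StrictMono ψ} := fun m => Nat.rec ⟨id, strictMono_id⟩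
      (fun m c => ⟨c.1 ∘ (pick (u ∘ (Φ (k + m)).1) (k + m)).1,
        c.2.comp (pick (u ∘ (Φ (k + m)).1) (k + m)).2⟩) m with hT
    have hTsucc : ∀ m, (T (m + 1)).1
        = (T m).1 ∘ (pick (u ∘ (Φ (k + m)).1) (k + m)).1 := fun m => rfl
    have hcomp2 : ∀ m, (Φ (k + m)).1 = (Φ k).1 ∘ (T m).1 := by
      intro m
      induction m with
      | zero => rfl
      | succ m ih =>
        have h1 : (Φ (k + (m + 1))).1
            = (Φ (k + m)).1 ∘ (pick (u ∘ (Φ (k + m)).1) (k + m)).1 := hΦsucc (k + m)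
        rw [h1, hTsucc m, ih]
        rfl
    refine ⟨fun m => (T m).1 (k + m), ?_, ?_⟩
    · apply strictMono_nat_of_lt_succ
      intro m
      have h1 : k + (m + 1) ≤ (pick (u ∘ (Φ (k + m)).1) (k + m)).1 (k + (m + 1)) :=
        (pick (u ∘ (Φ (k + m)).1) (k + m)).2.le_apply
      show (T m).1 (k + m) < (T (m + 1)).1 (k + (m + 1))
      rw [hTsucc m]
      show (T m).1 (k + m)
        < (T m).1 ((pick (u ∘ (Φ (k + m)).1) (k + m)).1 (k + (m + 1)))
      exact (T m).2 (by omega)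
    · intro m
      show (Φ (k + m)).1 (k + m) = (Φ k).1 ((T m).1 (k + m))
      rw [hcomp2 m]; rfl
  set v : ℕ → X := u ∘ δ with hvdef
  have hvb : Bornology.IsBounded (Set.range v) := hsub u δ hb
  have hrad_comp_le : ∀ (s : ℕ → X), Bornology.IsBounded (Set.range s) →
      ∀ (ψ : ℕ → ℕ), StrictMono ψ → rad (s ∘ ψ) ≤ rad s := by
    intro s hs ψ hψ
    refine le_csInf ⟨Rfun s (s 0), Set.mem_range_self _⟩ ?_
    rintro b ⟨y, rfl⟩
    calc rad (s ∘ ψ) ≤ Rfun (s ∘ ψ) y := rad_le (hsub s ψ hs) y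
      _ ≤ Rfun s y := by
        have h := limsup_comp_le (f := fun n => dist y (s n) ^ 2) (φ := ψ) hψ
          (fun n => sq_nonneg _) (sq_bounded hs y)
        exact h
  have hσ_le_sub : ∀ (k : ℕ) (ψ : ℕ → ℕ), StrictMono ψ →
      σ (u ∘ (Φ k).1) ≤ rad (v ∘ ψ) := by
    intro k ψ hψ
    obtain ⟨D, hD, hDeq⟩ := tail k
    have hψk : ∀ m : ℕ, k ≤ ψ (m + k) := fun m => le_trans (by omega) hψ.le_apply
    have hEmono : StrictMono (fun m => D (ψ (m + k) - k)) := by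
      intro a b hab
      apply hD
      have h1 := hψ (show a + k < b + k by omega)
      have h2 := hψk a
      have h3 := hψk b
      omega
    have hpoint : ∀ m, (v ∘ ψ) (m + k)
        = ((u ∘ (Φ k).1) ∘ (fun m => D (ψ (m + k) - k))) m := by
      intro m
      show u (δ (ψ (m + k))) = u ((Φ k).1 (D (ψ (m + k) - k)))
      congr 1
      have hm := hψk m
      set j := ψ (m + k) - k with hjdef
      rw [show ψ (m + k) = k + j by omega, hDeq]
    have hReq : Rfun (v ∘ ψ) = Rfun ((u ∘ (Φ k).1) ∘ (fun m => D (ψ (m + k) - k))) := by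
      funext y
      have hbd : IsBoundedUnder (· ≤ ·) atTop (fun n => dist y ((v ∘ ψ) n) ^ 2) :=
        sq_bounded (hsub v ψ hvb) y
      have hsh := limsup_shift k (fun n : ℕ => sq_nonneg (dist y ((v ∘ ψ) n))) hbd
      simp only [Rfun]
      rw [← hsh]
      congr 1
      funext m
      rw [hpoint m]
    have hradeq : rad (v ∘ ψ) = rad ((u ∘ (Φ k).1) ∘ (fun m => D (ψ (m + k) - k))) := by
      simp only [rad]
      rw [hReq]
    rw [hradeq]
    exact hσ_le _ (hΦb k) _ hEmono
  have hrad_v_le : ∀ k : ℕ, rad v ≤ rad (u ∘ (Φ (k + 1)).1) := by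
    intro k
    obtain ⟨D, hD, hDeq⟩ := tail (k + 1)
    refine le_csInf ⟨Rfun (u ∘ (Φ (k + 1)).1) (u 0), Set.mem_range_self _⟩ ?_
    rintro b ⟨y, rfl⟩
    have hbdv : IsBoundedUnder (· ≤ ·) atTop (fun n => dist y (v n) ^ 2) :=
      sq_bounded hvb y
    have hsh := limsup_shift (k + 1) (fun n : ℕ => sq_nonneg (dist y (v n))) hbdv
    have h1 : Rfun v y
        = limsup (fun m => dist y ((u ∘ (Φ (k + 1)).1) (D m)) ^ 2) atTop := by
      simp only [Rfun]
      rw [← hsh]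
      congr 1
      funext m
      have : v (m + (k + 1)) = (u ∘ (Φ (k + 1)).1) (D m) := by
        show u (δ (m + (k + 1))) = u ((Φ (k + 1)).1 (D m))
        congr 1
        rw [show m + (k + 1) = (k + 1) + m by omega, hDeq]
      rw [this]
    have h2 : limsup (fun m => dist y ((u ∘ (Φ (k + 1)).1) (D m)) ^ 2) atTop
        ≤ Rfun (u ∘ (Φ (k + 1)).1) y := by
      have h := limsup_comp_le (f := fun n => dist y ((u ∘ (Φ (k + 1)).1) n) ^ 2)
        (φ := D) hD (fun n => sq_nonneg _) (sq_bounded (hΦb (k + 1)) y)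
      exact h
    calc rad v ≤ Rfun v y := rad_le hvb y
      _ ≤ _ := by rw [h1]; exact h2
  have hreg : ∀ ψ : ℕ → ℕ, StrictMono ψ → rad (v ∘ ψ) = rad v := by
    intro ψ hψ
    refine le_antisymm (hrad_comp_le v hvb ψ hψ) ?_
    refine le_of_forall_pos_le_add fun ε hε => ?_
    obtain ⟨k, hk⟩ := exists_nat_gt (1 / ε)
    have hk1 : 1 / ((k : ℝ) + 1) < ε := by
      have h2 : 1 / ε < (k : ℝ) + 1 := by linarith
      rw [div_lt_iff₀ hε] at h2
      rw [div_lt_iff₀ (by positivity : (0:ℝ) < (k : ℝ) + 1)]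
      linarith
    have hlt : rad v < rad (v ∘ ψ) + ε :=
      calc rad v ≤ rad (u ∘ (Φ (k + 1)).1) := hrad_v_le k
        _ < σ (u ∘ (Φ k).1) + 1 / ((k : ℝ) + 1) := hrad k
        _ ≤ rad (v ∘ ψ) + 1 / ((k : ℝ) + 1) := by linarith [hσ_le_sub k ψ hψ]
        _ ≤ rad (v ∘ ψ) + ε := by linarith
    exact le_of_lt hlt
  obtain ⟨c, hc⟩ := exists_center hX hvb
  refine ⟨δ, hδmono, c, ?_⟩
  intro G hG p hp
  by_contra hnot
  rw [Metric.tendsto_atTop] at hnot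
  push_neg at hnot
  obtain ⟨ε, hε, hfreq⟩ := hnot
  have hfreq' : ∃ᶠ n in atTop, ε ≤ dist (p n) c := by
    rw [frequently_atTop]
    intro N
    obtain ⟨n, hn1, hn2⟩ := hfreq N
    exact ⟨n, hn1, hn2⟩
  obtain ⟨φ1, hφ1, hφ1p⟩ := extraction_of_frequently_atTop hfreq'
  obtain ⟨hGcpt, hcG⟩ := seg_compact hG
  obtain ⟨g, hgG, θ, hθ, hqθ⟩ := hGcpt.tendsto_subseq (fun n => (hp (φ1 n)).1)
  have hψ2m : StrictMono (φ1 ∘ θ) := hφ1.comp hθ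
  set ψ2 : ℕ → ℕ := φ1 ∘ θ with hψ2def
  set w' : ℕ → X := v ∘ ψ2 with hw'def
  have hw'b : Bornology.IsBounded (Set.range w') := hsub v ψ2 hvb
  have hpclose : ∀ n : ℕ, ε ≤ dist (p (ψ2 n)) c := fun n => hφ1p (θ n)
  have hpyth : ∀ n, dist (w' n) (p (ψ2 n)) ^ 2 ≤ dist c (w' n) ^ 2 - ε ^ 2 / 2 := by
    intro n
    have h1 : dist (w' n) (p (ψ2 n)) ^ 2 + dist (p (ψ2 n)) c ^ 2 / 2
        ≤ dist (w' n) c ^ 2 := nearest_pythagoras hcn hG (hp (ψ2 n)) hcG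
    have h2 := hpclose n
    rw [dist_comm c (w' n)]
    nlinarith [dist_nonneg (x := p (ψ2 n)) (y := c), hε.le]
  obtain ⟨C, hC0, hC⟩ := dist_bound_of_bounded hb
  set K : ℝ := C + dist (u 0) c with hKdef
  have hK0 : 0 ≤ K := by positivity
  have hwK : ∀ n, dist (w' n) c ≤ K := by
    intro n
    have h1 : dist (w' n) (u 0) ≤ C := hC (δ (ψ2 n)) 0
    calc dist (w' n) c ≤ dist (w' n) (u 0) + dist (u 0) c := dist_triangle _ _ _
      _ ≤ K := by rw [hKdef]; linarith
  have hpleK : ∀ n, dist (w' n) (p (ψ2 n)) ≤ K :=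
    fun n => le_trans ((hp (ψ2 n)).2 c hcG) (hwK n)
  have hmain : Rfun w' g ≤ Rfun w' c - ε ^ 2 / 2 := by
    have h0 : ∀ ζ : ℝ, 0 < ζ → Rfun w' g ≤ (Rfun w' c - ε ^ 2 / 2) + ζ := by
      intro ζ hζ
      set η : ℝ := min 1 (ζ / (2 * (2 * K + 2))) with hηdef
      have hη0 : 0 < η := lt_min one_pos (by positivity)
      have hη1 : η ≤ 1 := min_le_left _ _
      have hη2 : η * (2 * K + 2) ≤ ζ / 2 := by
        have h3 : η ≤ ζ / (2 * (2 * K + 2)) := min_le_right _ _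
        calc η * (2 * K + 2) ≤ (ζ / (2 * (2 * K + 2))) * (2 * K + 2) :=
              mul_le_mul_of_nonneg_right h3 (by positivity)
          _ = ζ / 2 := by field_simp
      have hten : Tendsto (fun n => dist (p (ψ2 n)) g) atTop (𝓝 0) := by
        have h := hqθ.dist (tendsto_const_nhds (x := g))
        simpa [hψ2def] using h
      have hev1 : ∀ᶠ n in atTop, dist (p (ψ2 n)) g < η :=
        hten.eventually (eventually_lt_nhds hη0)
      have hcb : Rfun w' c < Rfun w' c + ζ / 2 := by linarith
      have hev3 : ∀ᶠ n in atTop, dist c (w' n) ^ 2 < Rfun w' c + ζ / 2 :=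
        eventually_lt_of_limsup_lt hcb (sq_bounded hw'b c)
      refine limsup_le_of_le (sq_cobounded _ fun n => sq_nonneg _) ?_
      filter_upwards [hev1, hev3] with n h1 h3
      have h2 := hpyth n
      have h4 : dist g (w' n) ≤ η + dist (w' n) (p (ψ2 n)) := by
        calc dist g (w' n) ≤ dist g (p (ψ2 n)) + dist (p (ψ2 n)) (w' n) :=
              dist_triangle _ _ _
          _ ≤ η + dist (w' n) (p (ψ2 n)) := by
              rw [dist_comm g (p (ψ2 n)), dist_comm (p (ψ2 n)) (w' n)]
              linarith
      have h5 : (0:ℝ) ≤ dist g (w' n) := dist_nonneg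
      have h6 : (0:ℝ) ≤ dist (w' n) (p (ψ2 n)) := dist_nonneg
      have h7 := hpleK n
      nlinarith
    exact le_of_forall_pos_le_add h0
  have hr1 : rad w' = rad v := hreg ψ2 hψ2m
  have hr2 : Rfun w' c ≤ Rfun v c := by
    have h := limsup_comp_le (f := fun n => dist c (v n) ^ 2) (φ := ψ2) hψ2m
      (fun n => sq_nonneg _) (sq_bounded hvb c)
    exact h
  have hr3 : rad w' ≤ Rfun w' g := rad_le hw'b g
  have hε2 : 0 < ε ^ 2 / 2 := by positivity
  rw [hc] at hr2
  linarith

end part6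

section part7
variable {X : Type*} [MetricSpace X]

lemma subseq_bounded' {u : ℕ → X} (hb : Bornology.IsBounded (Set.range u)) (φ : ℕ → ℕ) :
    Bornology.IsBounded (Set.range (u ∘ φ)) :=
  hb.subset (Set.range_comp_subset_range φ u)

lemma exists_infinite_fiber {k : ℕ → ℕ} {M : ℕ} (h : ∀ n, k n ≤ M) :
    ∃ j, {n | k n = j}.Infinite := by
  by_contra h2
  push_neg at h2
  have huniv : (Set.univ : Set ℕ) ⊆ ⋃ j ∈ Finset.range (M + 1), {n | k n = j} := by
    intro n _
    simp only [Set.mem_iUnion]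
    exact ⟨k n, by
      simp only [Finset.mem_coe, Finset.mem_range]
      exact Nat.lt_succ_of_le (h n), rfl⟩
  exact Set.infinite_univ (Set.Finite.subset
    ((Finset.range (M + 1)).finite_toSet.biUnion fun j _ => h2 j) huniv)

lemma const_of_weakConv_of_infinite (hX : IsCAT0 X) {s : ℕ → X} {b z : X}
    (hsw : WeakConv s z) (hfreq : {n | s n = b}.Infinite) : b = z := by
  have hf : ∃ᶠ n in atTop, s n = b := Nat.frequently_atTop_iff_infinite.mpr hfreq
  obtain ⟨φ, hφ, hφs⟩ := extraction_of_frequently_atTop hf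
  have h := weakConv_subseq hX.2.2 hsw hφ
  have hconst : (s ∘ φ) = fun _ : ℕ => b := funext fun n => hφs n
  rw [hconst] at h
  exact weakConv_const hX h

/-- The weak topology on a CAT(0) space. -/
def Tdelta (hX : IsCAT0 X) : TopologicalSpace X where
  IsOpen U := TdeltaClosed Uᶜ
  isOpen_univ := by
    intro u hu _ x _
    exact absurd (hu 0) (by simp)
  isOpen_inter := by
    intro s t hs ht u hu hb x hw
    have hst : ∀ n, u n ∈ sᶜ ∨ u n ∈ tᶜ := by
      intro n
      have h1 := hu n
      by_contra hcon
      push_neg at hcon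
      simp only [Set.mem_compl_iff, not_not] at hcon
      exact h1 ⟨hcon.1, hcon.2⟩
    have hinfor : {n | u n ∈ sᶜ}.Infinite ∨ {n | u n ∈ tᶜ}.Infinite := by
      by_contra hcon
      push_neg at hcon
      refine Set.infinite_univ (Set.Finite.subset (hcon.1.union hcon.2) ?_)
      intro n _
      exact hst n
    rcases hinfor with hinf | hinf
    · obtain ⟨φ, hφ, hφmem⟩ := extraction_of_frequently_atTop
        (Nat.frequently_atTop_iff_infinite.mpr hinf)
      have hx : x ∈ sᶜ := hs (u ∘ φ) (fun n => hφmem n) (hb.subset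
        (Set.range_comp_subset_range φ u)) x (weakConv_subseq hX.2.2 hw hφ)
      exact fun hmem => hx hmem.1
    · obtain ⟨φ, hφ, hφmem⟩ := extraction_of_frequently_atTop
        (Nat.frequently_atTop_iff_infinite.mpr hinf)
      have hx : x ∈ tᶜ := ht (u ∘ φ) (fun n => hφmem n) (hb.subset
        (Set.range_comp_subset_range φ u)) x (weakConv_subseq hX.2.2 hw hφ)
      exact fun hmem => hx hmem.2
  isOpen_sUnion := by
    intro S hS u hu hb x hw hmem
    obtain ⟨t, htS, hxt⟩ := hmem
    exact (hS t htS u (fun n hnt => (hu n) ⟨t, htS, hnt⟩) hb x hw) hxt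

lemma Tdelta_isClosed (hX : IsCAT0 X) {A : Set X} :
    @IsClosed X (Tdelta hX) A ↔ TdeltaClosed A := by
  constructor
  · intro h
    have h2 : TdeltaClosed Aᶜᶜ := h.isOpen_compl
    rwa [compl_compl] at h2
  · intro h
    exact @IsClosed.mk X (Tdelta hX) A (by
      show TdeltaClosed Aᶜᶜ
      rwa [compl_compl])

lemma tendsto_Tdelta_of (hX : IsCAT0 X) {u : ℕ → X} {x : X}
    (hb : Bornology.IsBounded (Set.range u)) (hw : WeakConv u x) :
    Filter.Tendsto u Filter.atTop (@nhds X (Tdelta hX) x) := by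
  letI := Tdelta hX
  rw [_root_.tendsto_nhds]
  intro U hU hxU
  have hUc : TdeltaClosed Uᶜ := hU
  by_contra hcon
  have hne : ¬ ∀ᶠ n in atTop, u n ∈ U := hcon
  rw [Filter.not_eventually] at hne
  have hne2 : ∃ᶠ n in atTop, u n ∈ Uᶜ := hne
  obtain ⟨φ, hφ, hφmem⟩ := extraction_of_frequently_atTop hne2
  exact (hUc (u ∘ φ) hφmem (subseq_bounded' hb φ) x (weakConv_subseq hX.2.2 hw hφ)) hxU

lemma bounded_of_tendsto_Tdelta (hX : IsCAT0 X) {u : ℕ → X} {x : X}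
    (h : Filter.Tendsto u Filter.atTop (@nhds X (Tdelta hX) x)) :
    Bornology.IsBounded (Set.range u) := by
  by_contra hub
  have key : ∀ (N : ℕ) (C : ℝ), ∃ n, N < n ∧ C < dist x (u n) := by
    intro N C
    by_contra hcon
    push_neg at hcon
    apply hub
    have hne : (Finset.image (fun n => dist x (u n)) (Finset.range (N + 1))).Nonempty :=
      ⟨dist x (u 0), Finset.mem_image_of_mem _ (by simp)⟩
    set B := max C ((Finset.image (fun n => dist x (u n)) (Finset.range (N + 1))).max' hne)
      with hBdef
    have hB : ∀ n, dist x (u n) ≤ B := by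
      intro n
      rcases le_or_gt n N with h1 | h1
      · exact le_trans (Finset.le_max' _ _ (Finset.mem_image_of_mem
          (fun m => dist x (u m)) (Finset.mem_range.mpr (by omega)))) (le_max_right _ _)
      · exact le_trans (hcon n h1) (le_max_left _ _)
    have hsub3 : Set.range u ⊆ Metric.closedBall x B := by
      rintro _ ⟨n, rfl⟩
      rw [Metric.mem_closedBall, dist_comm]
      exact hB n
    exact Metric.isBounded_closedBall.subset hsub3
  have hrec : ∀ pr : ℕ × ℕ, ∃ n : ℕ, pr.2 < n ∧ (pr.1 : ℝ) + 1 < dist x (u n) :=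
    fun pr => key pr.2 ((pr.1 : ℝ) + 1)
  choose f hf1 hf2 using hrec
  set φ : ℕ → ℕ := fun k => Nat.rec (f (0, 0)) (fun k prev => f (k + 1, prev)) k with hφdef
  have hφsucc : ∀ k, φ (k + 1) = f (k + 1, φ k) := fun k => rfl
  have hmono : StrictMono φ := strictMono_nat_of_lt_succ fun n => by
    rw [hφsucc]; exact hf1 (n + 1, φ n)
  have hdist : ∀ k : ℕ, (k : ℝ) + 1 < dist x (u (φ k)) := by
    intro k
    cases k with
    | zero => exact hf2 (0, 0)
    | succ k => exact hf2 (k + 1, φ k)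
  set A : Set X := Set.range (fun k => u (φ k)) with hAdef
  have hAclosed : TdeltaClosed A := by
    intro s hs hsb z hsw
    obtain ⟨C, hC0, hC⟩ := dist_bound_of_bounded hsb
    have hsB : ∀ n, dist x (s n) ≤ dist x (s 0) + C := fun n =>
      le_trans (dist_triangle x (s 0) (s n)) (by linarith [hC 0 n])
    have hsel : ∀ n, ∃ j, u (φ j) = s n := by
      intro n
      obtain ⟨j, hj⟩ := hs n
      exact ⟨j, hj⟩
    choose k hk using hsel
    have hkB : ∀ n, k n ≤ ⌈dist x (s 0) + C⌉₊ := by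
      intro n
      have h1 : (k n : ℝ) + 1 < dist x (u (φ (k n))) := hdist (k n)
      rw [hk n] at h1
      have h3 : (k n : ℝ) ≤ dist x (s 0) + C := by linarith [hsB n]
      have h4 := Nat.ceil_mono h3
      rwa [Nat.ceil_natCast] at h4
    obtain ⟨j, hjinf⟩ := exists_infinite_fiber hkB
    have hsub2 : {n | k n = j} ⊆ {n | s n = u (φ j)} := by
      intro n hn
      simp only [Set.mem_setOf_eq] at *
      rw [← hn, hk n]
    have hb2 := const_of_weakConv_of_infinite hX hsw (hjinf.mono hsub2)
    rw [← hb2]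
    exact ⟨j, rfl⟩
  letI := Tdelta hX
  have hopen : IsOpen Aᶜ := by
    show TdeltaClosed Aᶜᶜ
    rwa [compl_compl]
  have hxA : x ∈ Aᶜ := by
    rintro ⟨k, hkx⟩
    have hkx' : u (φ k) = x := hkx
    have h2 := hdist k
    rw [hkx', dist_self] at h2
    have : (0:ℝ) ≤ (k : ℝ) := Nat.cast_nonneg k
    linarith
  have hev := (_root_.tendsto_nhds.mp h) Aᶜ hopen hxA
  obtain ⟨N, hN⟩ := Filter.mem_atTop_sets.mp hev
  exact (hN (φ N) hmono.le_apply) ⟨N, rfl⟩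

lemma weak_of_tendsto_Tdelta (hX : IsCAT0 X) {u : ℕ → X} {x : X}
    (h : Filter.Tendsto u Filter.atTop (@nhds X (Tdelta hX) x)) : WeakConv u x := by
  have hb := bounded_of_tendsto_Tdelta hX h
  by_contra hnw
  unfold WeakConv at hnw
  push_neg at hnw
  obtain ⟨G, hG, p, hp, hnt⟩ := hnw
  rw [Metric.tendsto_atTop] at hnt
  push_neg at hnt
  obtain ⟨ε, hε, hfr⟩ := hnt
  have hfr' : ∃ᶠ n in atTop, ε ≤ dist (p n) x := by
    rw [frequently_atTop]
    intro N
    obtain ⟨n, h1, h2⟩ := hfr N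
    exact ⟨n, h1, h2⟩
  obtain ⟨φ1, hφ1, hφ1p⟩ := extraction_of_frequently_atTop hfr'
  obtain ⟨φ2, hφ2, y, hwy⟩ := delta_compact hX (subseq_bounded' hb φ1)
  have hyx : y ≠ x := by
    intro hyxe
    rw [hyxe] at hwy
    have hnear : ∀ n, IsNearestPoint (((u ∘ φ1) ∘ φ2) n) G (p (φ1 (φ2 n))) :=
      fun n => hp (φ1 (φ2 n))
    have ht := hwy G hG (fun n => p (φ1 (φ2 n))) hnear
    have hd : Tendsto (fun n => dist (p (φ1 (φ2 n))) x) atTop (𝓝 0) := by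
      have h2 := ht.dist (tendsto_const_nhds (x := x))
      simpa using h2
    obtain ⟨n, hn⟩ := (hd.eventually (eventually_lt_nhds hε)).exists
    exact absurd (hφ1p (φ2 n)) (not_le.mpr hn)
  set w : ℕ → X := fun n => u (φ1 (φ2 n)) with hwdef
  have hwB : Bornology.IsBounded (Set.range w) :=
    subseq_bounded' (subseq_bounded' hb φ1) φ2
  have hwy' : WeakConv w y := hwy
  set B : Set X := Set.range w ∪ {y} with hBdef
  have hxB : x ∈ Bᶜ := by
    rintro (⟨n, hn⟩ | hy)
    · have heq : u (φ1 (φ2 n)) = x := hn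
      have hxG : x ∈ G := (seg_compact hG).2
      have hnear := hp (φ1 (φ2 n))
      rw [heq] at hnear
      have hps := nearest_self hnear hxG
      have h2 := hφ1p (φ2 n)
      rw [hps, dist_self] at h2
      linarith
    · exact hyx (Set.mem_singleton_iff.mp hy).symm
  have hBclosed : TdeltaClosed B := by
    intro s hs hsb z hsw
    by_cases hcase : ∃ b ∈ B, {n | s n = b}.Infinite
    · obtain ⟨b, hbB, hbinf⟩ := hcase
      have hb2 := const_of_weakConv_of_infinite hX hsw hbinf
      rwa [← hb2]
    · push_neg at hcase
      have hyfin : {n | s n = y}.Finite :=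
        (hcase y (Or.inr rfl))
      set D : Set ℕ := {n | s n ≠ y} with hDdef
      have hDcof : Dᶜ.Finite := by
        have hDeq : Dᶜ = {n | s n = y} := by
          ext n; simp [hDdef]
        rw [hDeq]; exact hyfin
      have hDran : ∀ n ∈ D, ∃ j, w j = s n := by
        intro n hn
        rcases hs n with ⟨j, hj⟩ | hy2
        · exact ⟨j, hj⟩
        · exact absurd hy2 hn
      classical
      set k : ℕ → ℕ := fun n => if hh : ∃ j, w j = s n then Nat.find hh else 0 with hkdef
      have hkspec : ∀ n ∈ D, w (k n) = s n := by
        intro n hn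
        have hh := hDran n hn
        show w (if hh' : ∃ j, w j = s n then Nat.find hh' else 0) = s n
        rw [dif_pos hh]
        exact Nat.find_spec hh
      have hktend : Tendsto k atTop atTop := by
        rw [Filter.tendsto_atTop]
        intro M
        have hfinM : {n | ¬ M ≤ k n}.Finite := by
          have hsub3 : {n | ¬ M ≤ k n} ⊆ Dᶜ ∪ ⋃ j ∈ Finset.range (M + 1), {n | s n = w j} := by
            intro n hn
            by_cases hnD : n ∈ D
            · right
              simp only [Set.mem_iUnion]
              refine ⟨k n, ?_, (hkspec n hnD).symm⟩
              simp only [Finset.mem_coe, Finset.mem_range]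
              simp only [Set.mem_setOf_eq] at hn
              omega
            · exact Or.inl hnD
          refine Set.Finite.subset (hDcof.union ?_) hsub3
          refine (Finset.range (M + 1)).finite_toSet.biUnion fun j _ => ?_
          exact (hcase (w j) (Or.inl (Set.mem_range_self j)))
        rw [← Nat.cofinite_eq_atTop, Filter.eventually_cofinite]
        exact hfinM
      have hDev : ∀ᶠ n in atTop, n ∈ D := by
        rw [← Nat.cofinite_eq_atTop, Filter.eventually_cofinite]
        exact hDcof.subset (fun n hn => hn)
      have hstep : ∀ m0 j0 : ℕ, ∃ n, m0 < n ∧ n ∈ D ∧ j0 < k n := by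
        intro m0 j0
        have h1 : ∀ᶠ n in atTop, n ∈ D ∧ j0 + 1 ≤ k n :=
          hDev.and (hktend.eventually_ge_atTop (j0 + 1))
        rw [eventually_atTop] at h1
        obtain ⟨N, hN⟩ := h1
        refine ⟨max N (m0 + 1), ?_, (hN _ (le_max_left _ _)).1, ?_⟩
        · have := le_max_right N (m0 + 1); omega
        · have := (hN _ (le_max_left N (m0 + 1))).2; omega
      choose fs hs1 hs2 hs3 using hstep
      set θ : ℕ → ℕ := fun m => Nat.rec (fs 0 0) (fun _ prev => fs prev (k prev)) m
        with hθdef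
      have hθsucc : ∀ m, θ (m + 1) = fs (θ m) (k (θ m)) := fun m => rfl
      have hθD : ∀ m, θ m ∈ D := by
        intro m
        cases m with
        | zero => exact hs2 0 0
        | succ m => exact hs2 (θ m) (k (θ m))
      have hθmono : StrictMono θ := strictMono_nat_of_lt_succ fun m => hs1 (θ m) (k (θ m))
      have hkθmono : StrictMono (fun m => k (θ m)) :=
        strictMono_nat_of_lt_succ fun m => by
          rw [hθsucc]; exact hs3 (θ m) (k (θ m))
      have hfun : (s ∘ θ) = w ∘ (fun m => k (θ m)) :=
        funext fun m => (hkspec (θ m) (hθD m)).symm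
      have h1 : WeakConv (s ∘ θ) z := weakConv_subseq hX.2.2 hsw hθmono
      have h2 : WeakConv (w ∘ fun m => k (θ m)) y := weakConv_subseq hX.2.2 hwy' hkθmono
      rw [hfun] at h1
      have hzy := weakConv_unique hX h1 h2
      rw [hzy]
      exact Or.inr rfl
  letI := Tdelta hX
  have hopen : IsOpen Bᶜ := by
    show TdeltaClosed Bᶜᶜ
    rwa [compl_compl]
  have hev := (_root_.tendsto_nhds.mp h) Bᶜ hopen hxB
  obtain ⟨N, hN⟩ := Filter.mem_atTop_sets.mp hev
  have hge : N ≤ φ1 (φ2 N) := le_trans hφ2.le_apply hφ1.le_apply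
  exact (hN (φ1 (φ2 N)) hge) (Or.inl (Set.mem_range_self N))

end part7


/-- For every CAT(0) space `X` there is a unique topology
`T_Δ` such that a sequence converges in `T_Δ` iff it is bounded and converges
weakly, and `T_Δ` is sequential. -/
theorem weak_topology_exists_unique (X : Type*) [MetricSpace X] (hX : IsCAT0 X) :
    ∃! T : TopologicalSpace X,
      (∀ (u : ℕ → X) (x : X),
          Filter.Tendsto u Filter.atTop (@nhds X T x) ↔
            Bornology.IsBounded (Set.range u) ∧ WeakConv u x) ∧
      @SequentialSpace X T := by
  refine ⟨Tdelta hX, ⟨?_, ?_⟩, ?_⟩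
  · intro u x
    constructor
    · intro h
      exact ⟨bounded_of_tendsto_Tdelta hX h, weak_of_tendsto_Tdelta hX h⟩
    · rintro ⟨hb, hw⟩
      exact tendsto_Tdelta_of hX hb hw
  · letI := Tdelta hX
    refine ⟨fun A hA => ?_⟩
    rw [Tdelta_isClosed hX]
    intro u hu hb z hw
    exact hA hu (tendsto_Tdelta_of hX hb hw)
  · rintro T' ⟨hiff', hseq'⟩
    have hclosed : ∀ A : Set X, @IsClosed X T' A ↔ TdeltaClosed A := by
      intro A
      constructor
      · intro hA u hu hb z hw
        have ht : Filter.Tendsto u Filter.atTop (@nhds X T' z) := (hiff' u z).mpr ⟨hb, hw⟩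
        have hsc := @IsClosed.isSeqClosed X T' A hA
        exact hsc hu ht

      · intro hA
        letI := T'
        haveI := hseq'
        refine IsSeqClosed.isClosed ?_
        intro u z hu ht
        obtain ⟨hb, hw⟩ := (hiff' u z).mp ht
        exact hA u hu hb z hw
    have h1 : ∀ U : Set X, @IsOpen X T' U ↔ @IsOpen X (Tdelta hX) U := by
      intro U
      rw [← @isClosed_compl_iff X T' U, ← @isClosed_compl_iff X (Tdelta hX) U]
      rw [hclosed Uᶜ, Tdelta_isClosed hX]
    refine TopologicalSpace.ext ?_
    funext U
    exact propext (h1 U)
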